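/- For every positive integer k and every prime p, the p-adic valuation of the rational number F_{kp,k} := ∑ 1/(i_1 i_2 ⋯ i_k), summed over all k-tuples of positive integers (i_1,...,i_k) with i_1 + ⋯ + i_k = kp, equals -k. -/

import Mathlib

/-- `F n k = ∑ 1/(i₁⋯i_k)` over ordered `k`-tuples of positive integers with sum `n`. -/
def F (n k : ℕ) : ℚ :=
  ∑ f ∈ (Finset.Nat.antidiagonalTuple k n).filter (fun f => ∀ j, f j ≠ 0),
    ∏ j, (1 : ℚ) / (f j : ℚ)

private lemma padic_sum_lt {p : ℕ} [Fact p.Prime] {ι : Type*} [DecidableEq ι] (S : Finset ι)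
    (f : ι → ℚ) (c : ℤ) (hpos : ∀ i ∈ S, 0 < f i) (hval : ∀ i ∈ S, c < padicValRat p (f i)) :
    S = ∅ ∨ c < padicValRat p (∑ i ∈ S, f i) := by
  induction S using Finset.induction with
  | empty => exact Or.inl rfl
  | @insert a s hna ih =>
    right
    rw [Finset.sum_insert hna]
    rcases Finset.eq_empty_or_nonempty s with rfl | hsne
    · simpa using hval a (by simp)
    · have h : c < padicValRat p (∑ i ∈ s, f i) := by
        rcases ih (fun i hi => hpos i (Finset.mem_insert_of_mem hi))
            (fun i hi => hval i (Finset.mem_insert_of_mem hi)) with h | h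
        · exact absurd h hsne.ne_empty
        · exact h
      have hs0 : 0 < ∑ i ∈ s, f i :=
        Finset.sum_pos (fun i hi => hpos i (Finset.mem_insert_of_mem hi)) hsne
      have hfa := hpos a (Finset.mem_insert_self a s)
      have hsum_ne : f a + ∑ i ∈ s, f i ≠ 0 := by positivity
      calc c < min (padicValRat p (f a)) (padicValRat p (∑ i ∈ s, f i)) :=
            lt_min (hval a (Finset.mem_insert_self a s)) h
        _ ≤ _ := padicValRat.min_le_padicValRat_add hsum_ne

private lemma mul_le_pow_self {p v : ℕ} (hp : 2 ≤ p) : p * v ≤ p ^ v := by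
  rcases Nat.eq_zero_or_pos v with rfl | hv
  · simp
  · calc p * v ≤ p * p ^ (v - 1) := by
          refine Nat.mul_le_mul_left _ ?_
          calc v ≤ 2 ^ (v - 1) := by
                have : v - 1 < 2 ^ (v - 1) := Nat.lt_pow_self one_lt_two
                omega
            _ ≤ p ^ (v - 1) := Nat.pow_le_pow_left hp _
      _ = p ^ v := by rw [← pow_succ']; congr 1; omega

theorem padicValRat_F_kp (k : ℕ) (hk : 0 < k) (p : ℕ) (hp : p.Prime) :
    padicValRat p (F (k * p) k) = -(k : ℤ) := by
  haveI : Fact p.Prime := ⟨hp⟩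
  classical
  set s := (Finset.Nat.antidiagonalTuple k (k * p)).filter (fun f => ∀ j, f j ≠ 0) with hs
  set c : Fin k → ℕ := fun _ => p with hcdef
  have hc : c ∈ s := by
    simp only [hs, Finset.mem_filter, Finset.Nat.mem_antidiagonalTuple]
    refine ⟨by simp [hcdef, Finset.sum_const, mul_comm], fun j => hp.ne_zero⟩
  -- value of the main term
  have hterm : (∏ j : Fin k, (1 : ℚ) / (c j : ℚ)) = ((p : ℚ) ^ k)⁻¹ := by
    simp [hcdef, one_div, Finset.prod_const]
  have hterm_val : padicValRat p (∏ j : Fin k, (1 : ℚ) / (c j : ℚ)) = -(k : ℤ) := by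
    rw [hterm, padicValRat.self_pow_inv]
  have hterm_pos : 0 < ∏ j : Fin k, (1 : ℚ) / (c j : ℚ) := by
    rw [hterm]
    have hp0 : (0 : ℚ) < p := by exact_mod_cast hp.pos
    positivity
  -- positivity of all terms
  have hpos : ∀ f ∈ s, 0 < ∏ j, (1 : ℚ) / (f j : ℚ) := by
    intro f hf
    rw [hs, Finset.mem_filter] at hf
    exact Finset.prod_pos fun j _ => by
      have := Nat.pos_of_ne_zero (hf.2 j); positivity
  -- valuation of each term
  have hval_term : ∀ f ∈ s, padicValRat p (∏ j, (1 : ℚ) / (f j : ℚ))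
      = -((∑ j, padicValNat p (f j) : ℕ) : ℤ) := by
    intro f hf
    rw [hs, Finset.mem_filter] at hf
    have hprod : (∏ j, (1 : ℚ) / (f j : ℚ)) = (((∏ j, f j : ℕ) : ℚ))⁻¹ := by
      push_cast
      rw [← Finset.prod_inv_distrib]
      simp [one_div]
    have hfac : padicValNat p (∏ j, f j) = ∑ j, padicValNat p (f j) := by
      have h1 := Nat.factorization_prod (S := Finset.univ) (g := f)
        (fun j _ => hf.2 j)
      have h2 := congrArg (fun g => g p) h1
      simpa [Nat.factorization_def _ hp, Finsupp.finset_sum_apply] using h2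
    rw [hprod, padicValRat.inv, padicValRat.of_nat, hfac]
  -- other terms have valuation > -k
  have hval_other : ∀ f ∈ s.erase c,
      -(k : ℤ) < padicValRat p (∏ j, (1 : ℚ) / (f j : ℚ)) := by
    intro f hf
    obtain ⟨hne, hfs⟩ := Finset.mem_erase.mp hf
    rw [hval_term f hfs]
    have hmem := hfs
    rw [hs, Finset.mem_filter, Finset.Nat.mem_antidiagonalTuple] at hmem
    obtain ⟨hsum, hnz⟩ := hmem
    set v : Fin k → ℕ := fun j => padicValNat p (f j) with hv
    have h1 : ∀ j, p ^ v j ≤ f j := fun j =>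
      Nat.le_of_dvd (Nat.pos_of_ne_zero (hnz j)) pow_padicValNat_dvd
    have h2 : ∀ j, p * v j ≤ p ^ v j := fun j => mul_le_pow_self hp.two_le
    -- key: ∑ v < k
    have hlt : ∑ j, v j < k := by
      by_contra hge
      push_neg at hge
      have hA : ∑ j : Fin k, p * v j ≤ ∑ j : Fin k, p ^ v j :=
        Finset.sum_le_sum fun j _ => h2 j
      have hB : ∑ j : Fin k, p ^ v j ≤ ∑ j : Fin k, f j :=
        Finset.sum_le_sum fun j _ => h1 j
      have hC : k * p ≤ ∑ j : Fin k, p * v j := by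
        rw [← Finset.mul_sum]
        calc k * p ≤ p * ∑ j, v j := by rw [mul_comm]; exact Nat.mul_le_mul_left p hge
          _ = _ := rfl
      rw [hsum] at hB
      have hAB : ∑ j : Fin k, p * v j = ∑ j : Fin k, p ^ v j := le_antisymm hA (by omega)
      have hBC : ∑ j : Fin k, p ^ v j = ∑ j : Fin k, f j := by rw [hsum]; omega
      have e1 : ∀ j, p * v j = p ^ v j :=
        fun j => (Finset.sum_eq_sum_iff_of_le fun i _ => h2 i).mp hAB j (Finset.mem_univ j)
      have e2 : ∀ j, p ^ v j = f j :=
        fun j => (Finset.sum_eq_sum_iff_of_le fun i _ => h1 i).mp hBC j (Finset.mem_univ j)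
      have hv1 : ∀ j, 1 ≤ v j := by
        intro j
        by_contra h0
        push_neg at h0
        interval_cases h : v j
        · have := e1 j; rw [h] at this; simp at this
      have hsv : ∑ j : Fin k, v j = k := by
        have : p * ∑ j : Fin k, v j = p * k := by
          rw [Finset.mul_sum]
          calc ∑ j : Fin k, p * v j = ∑ j : Fin k, f j := by rw [hAB, hBC]
            _ = k * p := hsum
            _ = p * k := mul_comm _ _
        exact Nat.eq_of_mul_eq_mul_left hp.pos this
      have hones : ∀ j : Fin k, v j = 1 := by
        have hcard : ∑ _j : Fin k, (1 : ℕ) = k := by simp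
        have := (Finset.sum_eq_sum_iff_of_le (s := (Finset.univ : Finset (Fin k)))
          (f := fun _ => (1 : ℕ)) (g := v) fun i _ => hv1 i).mp (by rw [hcard, hsv])
        exact fun j => ((this j (Finset.mem_univ j))).symm
      apply hne
      funext j
      have := e2 j
      rw [hones j, pow_one] at this
      exact this.symm
    exact neg_lt_neg (by exact_mod_cast hlt)
  -- split off main term
  have hF : F (k * p) k = (∏ j : Fin k, (1 : ℚ) / (c j : ℚ))
      + ∑ f ∈ s.erase c, ∏ j, (1 : ℚ) / (f j : ℚ) := by
    rw [F, ← hs]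
    exact (Finset.add_sum_erase s _ hc).symm
  rw [hF]
  rcases Finset.eq_empty_or_nonempty (s.erase c) with he | hne
  · rw [he, Finset.sum_empty, add_zero]; exact hterm_val
  · have h : -(k : ℤ) < padicValRat p (∑ f ∈ s.erase c, ∏ j, (1 : ℚ) / (f j : ℚ)) := by
      rcases padic_sum_lt (p := p) (s.erase c) (fun f => ∏ j, (1 : ℚ) / (f j : ℚ)) (-(k : ℤ))
          (fun f hf => hpos f (Finset.mem_of_mem_erase hf)) hval_other with h | h
      · exact absurd h hne.ne_empty
      · exact h
    have hrest_pos : 0 < ∑ f ∈ s.erase c, ∏ j, (1 : ℚ) / (f j : ℚ) :=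
      Finset.sum_pos (fun f hf => hpos f (Finset.mem_of_mem_erase hf)) hne
    have hne1 : (∏ j : Fin k, (1 : ℚ) / (c j : ℚ)) ≠ 0 := ne_of_gt hterm_pos
    have hne2 : (∑ f ∈ s.erase c, ∏ j, (1 : ℚ) / (f j : ℚ)) ≠ 0 := ne_of_gt hrest_pos
    have hne3 : (∏ j : Fin k, (1 : ℚ) / (c j : ℚ))
        + ∑ f ∈ s.erase c, ∏ j, (1 : ℚ) / (f j : ℚ) ≠ 0 := by positivity
    rw [padicValRat.add_eq_of_lt hne3 hne1 hne2 (by rw [hterm_val]; exact h), hterm_val]
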